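/- Applying the EMP update at edge e, endpoint i, to dual variable λ decreases the dual objective by L(λ) - L(λ') = -(2/η)·log(Σ_{x∈χ} √(S_{e,i}^λ(x)·μ_i^λ(x))), which is at least (1/(4η))·‖S_{e,i}^λ - μ_i^λ‖₁². -/

import Mathlib

open Finset

noncomputable section

variable {n m d : ℕ}

/-- The endpoint of edge `e` at side `s`. -/
def ep (ends : Fin m → Fin n × Fin n) (e : Fin m) (s : Fin 2) : Fin n :=
  if s = 0 then (ends e).1 else (ends e).2

/-- Unnormalized vertex factor. -/
def vExp (η : ℝ) (ends : Fin m → Fin n × Fin n) (Ci : Fin n → Fin d → ℝ)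
    (lam : Fin m → Fin 2 → Fin d → ℝ) (i : Fin n) (x : Fin d) : ℝ :=
  Real.exp (η * (-(Ci i x) +
    ∑ e, ∑ s, if ep ends e s = i then lam e s x else 0))

/-- Unnormalized edge factor. -/
def eExp (η : ℝ) (Ce : Fin m → Fin d → Fin d → ℝ)
    (lam : Fin m → Fin 2 → Fin d → ℝ) (e : Fin m) (x₁ x₂ : Fin d) : ℝ :=
  Real.exp (η * (-(Ce e x₁ x₂) - lam e 0 x₁ - lam e 1 x₂))

/-- Normalized vertex pseudo-marginal `μ_i^λ`. -/
def muV (η : ℝ) (ends : Fin m → Fin n × Fin n) (Ci : Fin n → Fin d → ℝ)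
    (lam : Fin m → Fin 2 → Fin d → ℝ) (i : Fin n) (x : Fin d) : ℝ :=
  vExp η ends Ci lam i x / ∑ x', vExp η ends Ci lam i x'

/-- Normalized edge pseudo-marginal `μ_e^λ`. -/
def muE (η : ℝ) (Ce : Fin m → Fin d → Fin d → ℝ)
    (lam : Fin m → Fin 2 → Fin d → ℝ) (e : Fin m) (x₁ x₂ : Fin d) : ℝ :=
  eExp η Ce lam e x₁ x₂ / ∑ y₁, ∑ y₂, eExp η Ce lam e y₁ y₂

/-- Marginalization `S_{e,i}^λ` of the edge pseudo-marginal onto endpoint `s`. -/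
def Smarg (η : ℝ) (Ce : Fin m → Fin d → Fin d → ℝ)
    (lam : Fin m → Fin 2 → Fin d → ℝ) (e : Fin m) (s : Fin 2) (x : Fin d) : ℝ :=
  if s = 0 then ∑ x₂, muE η Ce lam e x x₂ else ∑ x₁, muE η Ce lam e x₁ x

/-- The dual objective `L`. -/
def dualL (η : ℝ) (ends : Fin m → Fin n × Fin n) (Ci : Fin n → Fin d → ℝ)
    (Ce : Fin m → Fin d → Fin d → ℝ) (lam : Fin m → Fin 2 → Fin d → ℝ) : ℝ :=
  (1 / η) * ∑ i, Real.log (∑ x, vExp η ends Ci lam i x)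
    + (1 / η) * ∑ e, Real.log (∑ x₁, ∑ x₂, eExp η Ce lam e x₁ x₂)

/-- The EMP update at edge `e₀`, endpoint `s₀`:
`λ'_{e₀,i₀}(x) = λ_{e₀,i₀}(x) + (1/(2η)) log (S_{e₀,i₀}^λ(x)/μ_{i₀}^λ(x))`,
all other coordinates unchanged. -/
def empUpdate (η : ℝ) (ends : Fin m → Fin n × Fin n) (Ci : Fin n → Fin d → ℝ)
    (Ce : Fin m → Fin d → Fin d → ℝ) (lam : Fin m → Fin 2 → Fin d → ℝ)
    (e₀ : Fin m) (s₀ : Fin 2) : Fin m → Fin 2 → Fin d → ℝ :=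
  fun e s x =>
    if e = e₀ ∧ s = s₀ then
      lam e s x + (1 / (2 * η)) *
        Real.log (Smarg η Ce lam e s x / muV η ends Ci lam (ep ends e s) x)
    else lam e s x


-- helper lemmas for emp_update_improvement

lemma EMP_sum_vExp_pos (hd : 0 < d) (η : ℝ) (ends : Fin m → Fin n × Fin n)
    (Ci : Fin n → Fin d → ℝ) (lam : Fin m → Fin 2 → Fin d → ℝ) (i : Fin n) :
    0 < ∑ x, vExp η ends Ci lam i x :=
  Finset.sum_pos (fun x _ => Real.exp_pos _) ⟨⟨0, hd⟩, Finset.mem_univ _⟩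

lemma EMP_sum_eExp_pos (hd : 0 < d) (η : ℝ) (Ce : Fin m → Fin d → Fin d → ℝ)
    (lam : Fin m → Fin 2 → Fin d → ℝ) (e : Fin m) :
    0 < ∑ x₁, ∑ x₂, eExp η Ce lam e x₁ x₂ :=
  Finset.sum_pos (fun _ _ => Finset.sum_pos (fun _ _ => Real.exp_pos _)
    ⟨⟨0, hd⟩, Finset.mem_univ _⟩) ⟨⟨0, hd⟩, Finset.mem_univ _⟩

lemma EMP_muV_pos (hd : 0 < d) (η : ℝ) (ends : Fin m → Fin n × Fin n)
    (Ci : Fin n → Fin d → ℝ) (lam : Fin m → Fin 2 → Fin d → ℝ) (i : Fin n) (x : Fin d) :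
    0 < muV η ends Ci lam i x :=
  div_pos (Real.exp_pos _) (EMP_sum_vExp_pos hd η ends Ci lam i)

lemma EMP_muE_pos (hd : 0 < d) (η : ℝ) (Ce : Fin m → Fin d → Fin d → ℝ)
    (lam : Fin m → Fin 2 → Fin d → ℝ) (e : Fin m) (x₁ x₂ : Fin d) :
    0 < muE η Ce lam e x₁ x₂ :=
  div_pos (Real.exp_pos _) (EMP_sum_eExp_pos hd η Ce lam e)

lemma EMP_Smarg_pos (hd : 0 < d) (η : ℝ) (Ce : Fin m → Fin d → Fin d → ℝ)
    (lam : Fin m → Fin 2 → Fin d → ℝ) (e : Fin m) (s : Fin 2) (x : Fin d) :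
    0 < Smarg η Ce lam e s x := by
  unfold Smarg
  split <;>
    exact Finset.sum_pos (fun _ _ => EMP_muE_pos hd η Ce lam e _ _) ⟨⟨0, hd⟩, Finset.mem_univ _⟩

lemma EMP_sum_muV (hd : 0 < d) (η : ℝ) (ends : Fin m → Fin n × Fin n)
    (Ci : Fin n → Fin d → ℝ) (lam : Fin m → Fin 2 → Fin d → ℝ) (i : Fin n) :
    ∑ x, muV η ends Ci lam i x = 1 := by
  unfold muV
  rw [← Finset.sum_div, div_self (EMP_sum_vExp_pos hd η ends Ci lam i).ne']

lemma EMP_sum_Smarg (hd : 0 < d) (η : ℝ) (Ce : Fin m → Fin d → Fin d → ℝ)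
    (lam : Fin m → Fin 2 → Fin d → ℝ) (e : Fin m) (s : Fin 2) :
    ∑ x, Smarg η Ce lam e s x = 1 := by
  have hZ := (EMP_sum_eExp_pos hd η Ce lam e).ne'
  unfold Smarg muE
  split
  · simp only [← Finset.sum_div]
    exact div_self hZ
  · rw [Finset.sum_comm]
    simp only [← Finset.sum_div]
    exact div_self hZ

lemma EMP_exp_eta_log_div {η a b : ℝ} (hη : 0 < η) (ha : 0 < a) (hb : 0 < b) :
    Real.exp (η * ((1 / (2 * η)) * Real.log (a / b))) = Real.sqrt a / Real.sqrt b := by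
  have h : η * ((1 / (2 * η)) * Real.log (a / b)) = Real.log (a / b) * (1 / 2) := by
    field_simp
  rw [h, ← Real.rpow_def_of_pos (div_pos ha hb), ← Real.sqrt_eq_rpow, Real.sqrt_div ha.le]

lemma EMP_exp_eta_log_div_neg {η a b : ℝ} (hη : 0 < η) (ha : 0 < a) (hb : 0 < b) :
    Real.exp (-(η * ((1 / (2 * η)) * Real.log (a / b)))) = Real.sqrt b / Real.sqrt a := by
  rw [Real.exp_neg, EMP_exp_eta_log_div hη ha hb, inv_div]

lemma EMP_vExp_update (hη : 0 < η) (hd : 0 < d) (ends : Fin m → Fin n × Fin n)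
    (Ci : Fin n → Fin d → ℝ) (Ce : Fin m → Fin d → Fin d → ℝ)
    (lam : Fin m → Fin 2 → Fin d → ℝ) (e₀ : Fin m) (s₀ : Fin 2) (i : Fin n) (x : Fin d) :
    vExp η ends Ci (empUpdate η ends Ci Ce lam e₀ s₀) i x
      = vExp η ends Ci lam i x *
        (if ep ends e₀ s₀ = i then
          Real.sqrt (Smarg η Ce lam e₀ s₀ x) /
            Real.sqrt (muV η ends Ci lam (ep ends e₀ s₀) x) else 1) := by
  set δ : Fin d → ℝ := fun y => (1 / (2 * η)) *
    Real.log (Smarg η Ce lam e₀ s₀ y / muV η ends Ci lam (ep ends e₀ s₀) y) with hδ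
  have hsum : (∑ e, ∑ s, if ep ends e s = i then empUpdate η ends Ci Ce lam e₀ s₀ e s x else 0)
      = (∑ e, ∑ s, if ep ends e s = i then lam e s x else 0)
        + (if ep ends e₀ s₀ = i then δ x else 0) := by
    have h1 : ∀ e s, (if ep ends e s = i then empUpdate η ends Ci Ce lam e₀ s₀ e s x else 0)
        = (if ep ends e s = i then lam e s x else 0)
          + (if e = e₀ then if s = s₀ then (if ep ends e₀ s₀ = i then δ x else 0) else 0
             else 0) := by
      intro e s
      by_cases h1 : e = e₀
      · subst h1
        by_cases h2 : s = s₀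
        · subst h2
          by_cases h3 : ep ends e s = i <;> simp [empUpdate, h3, hδ]
        · simp [empUpdate, h2]
      · simp [empUpdate, h1]
    simp only [h1, Finset.sum_add_distrib]
    congr 1
    rw [Finset.sum_comm]
    simp
  unfold vExp
  rw [hsum, show η * (-Ci i x + ((∑ e, ∑ s, if ep ends e s = i then lam e s x else 0)
        + (if ep ends e₀ s₀ = i then δ x else 0)))
      = η * (-Ci i x + ∑ e, ∑ s, if ep ends e s = i then lam e s x else 0)
        + η * (if ep ends e₀ s₀ = i then δ x else 0) by ring, Real.exp_add]
  congr 1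
  by_cases h3 : ep ends e₀ s₀ = i
  · rw [if_pos h3, if_pos h3, hδ]
    exact EMP_exp_eta_log_div hη (EMP_Smarg_pos hd η Ce lam e₀ s₀ x)
      (EMP_muV_pos hd η ends Ci lam _ x)
  · simp [h3]

lemma EMP_eExp_update (hη : 0 < η) (hd : 0 < d) (ends : Fin m → Fin n × Fin n)
    (Ci : Fin n → Fin d → ℝ) (Ce : Fin m → Fin d → Fin d → ℝ)
    (lam : Fin m → Fin 2 → Fin d → ℝ) (e₀ : Fin m) (s₀ : Fin 2) (e : Fin m) (x₁ x₂ : Fin d) :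
    eExp η Ce (empUpdate η ends Ci Ce lam e₀ s₀) e x₁ x₂
      = eExp η Ce lam e x₁ x₂ *
        (if e = e₀ then
          Real.sqrt (muV η ends Ci lam (ep ends e₀ s₀) (if s₀ = 0 then x₁ else x₂)) /
            Real.sqrt (Smarg η Ce lam e₀ s₀ (if s₀ = 0 then x₁ else x₂)) else 1) := by
  obtain hs | hs : s₀ = 0 ∨ s₀ = 1 := by omega
  · subst hs
    by_cases he : e = e₀
    · subst he
      have h0 : empUpdate η ends Ci Ce lam e 0 e 0 x₁
          = lam e 0 x₁ + (1 / (2 * η)) *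
              Real.log (Smarg η Ce lam e 0 x₁ / muV η ends Ci lam (ep ends e 0) x₁) := by
        simp [empUpdate]
      have h1 : empUpdate η ends Ci Ce lam e 0 e 1 x₂ = lam e 1 x₂ := by
        simp [empUpdate, show (1 : Fin 2) ≠ 0 by decide]
      unfold eExp
      rw [h0, h1, show η * (-Ce e x₁ x₂ - (lam e 0 x₁ + (1 / (2 * η)) *
            Real.log (Smarg η Ce lam e 0 x₁ / muV η ends Ci lam (ep ends e 0) x₁))
            - lam e 1 x₂)
          = η * (-Ce e x₁ x₂ - lam e 0 x₁ - lam e 1 x₂)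
            + -(η * ((1 / (2 * η)) *
              Real.log (Smarg η Ce lam e 0 x₁ / muV η ends Ci lam (ep ends e 0) x₁))) by ring,
        Real.exp_add,
        EMP_exp_eta_log_div_neg hη (EMP_Smarg_pos hd η Ce lam e 0 x₁)
          (EMP_muV_pos hd η ends Ci lam _ x₁)]
      simp
    · have h0 : ∀ s y, empUpdate η ends Ci Ce lam e₀ 0 e s y = lam e s y := by
        intro s y; simp [empUpdate, he]
      unfold eExp
      rw [h0, h0, if_neg he, mul_one]
  · subst hs
    by_cases he : e = e₀
    · subst he
      have h0 : empUpdate η ends Ci Ce lam e 1 e 0 x₁ = lam e 0 x₁ := by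
        simp [empUpdate, show (0 : Fin 2) ≠ 1 by decide]
      have h1 : empUpdate η ends Ci Ce lam e 1 e 1 x₂
          = lam e 1 x₂ + (1 / (2 * η)) *
              Real.log (Smarg η Ce lam e 1 x₂ / muV η ends Ci lam (ep ends e 1) x₂) := by
        simp [empUpdate]
      unfold eExp
      rw [h0, h1, show η * (-Ce e x₁ x₂ - lam e 0 x₁
            - (lam e 1 x₂ + (1 / (2 * η)) *
              Real.log (Smarg η Ce lam e 1 x₂ / muV η ends Ci lam (ep ends e 1) x₂)))
          = η * (-Ce e x₁ x₂ - lam e 0 x₁ - lam e 1 x₂)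
            + -(η * ((1 / (2 * η)) *
              Real.log (Smarg η Ce lam e 1 x₂ / muV η ends Ci lam (ep ends e 1) x₂))) by ring,
        Real.exp_add,
        EMP_exp_eta_log_div_neg hη (EMP_Smarg_pos hd η Ce lam e 1 x₂)
          (EMP_muV_pos hd η ends Ci lam _ x₂)]
      simp [show ¬((1 : Fin 2) = 0) by decide]
    · have h0 : ∀ s y, empUpdate η ends Ci Ce lam e₀ 1 e s y = lam e s y := by
        intro s y; simp [empUpdate, he]
      unfold eExp
      rw [h0, h0, if_neg he, mul_one]

lemma EMP_sum_vExp_update (hη : 0 < η) (hd : 0 < d) (ends : Fin m → Fin n × Fin n)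
    (Ci : Fin n → Fin d → ℝ) (Ce : Fin m → Fin d → Fin d → ℝ)
    (lam : Fin m → Fin 2 → Fin d → ℝ) (e₀ : Fin m) (s₀ : Fin 2) (i : Fin n) :
    (∑ x, vExp η ends Ci (empUpdate η ends Ci Ce lam e₀ s₀) i x)
      = (∑ x, vExp η ends Ci lam i x) *
        (if ep ends e₀ s₀ = i then
          ∑ x, Real.sqrt (Smarg η Ce lam e₀ s₀ x * muV η ends Ci lam (ep ends e₀ s₀) x)
         else 1) := by
  by_cases h : ep ends e₀ s₀ = i
  · rw [if_pos h, Finset.mul_sum]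
    apply Finset.sum_congr rfl
    intro x _
    rw [EMP_vExp_update hη hd ends Ci Ce lam e₀ s₀ i x, if_pos h, h]
    have hvx : vExp η ends Ci lam i x
        = muV η ends Ci lam i x * (∑ x', vExp η ends Ci lam i x') := by
      unfold muV
      rw [div_mul_cancel₀ _ (EMP_sum_vExp_pos hd η ends Ci lam i).ne']
    rw [hvx, Real.sqrt_mul (EMP_Smarg_pos hd η Ce lam e₀ s₀ x).le,
      show muV η ends Ci lam i x * (∑ x', vExp η ends Ci lam i x') *
          (Real.sqrt (Smarg η Ce lam e₀ s₀ x) / Real.sqrt (muV η ends Ci lam i x))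
        = (∑ x', vExp η ends Ci lam i x') * Real.sqrt (Smarg η Ce lam e₀ s₀ x) *
          (muV η ends Ci lam i x / Real.sqrt (muV η ends Ci lam i x)) by ring,
      Real.div_sqrt]
    ring
  · rw [if_neg h, mul_one]
    apply Finset.sum_congr rfl
    intro x _
    rw [EMP_vExp_update hη hd ends Ci Ce lam e₀ s₀ i x, if_neg h, mul_one]

lemma EMP_sum_eExp_update (hη : 0 < η) (hd : 0 < d) (ends : Fin m → Fin n × Fin n)
    (Ci : Fin n → Fin d → ℝ) (Ce : Fin m → Fin d → Fin d → ℝ)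
    (lam : Fin m → Fin 2 → Fin d → ℝ) (e₀ : Fin m) (s₀ : Fin 2) (e : Fin m) :
    (∑ x₁, ∑ x₂, eExp η Ce (empUpdate η ends Ci Ce lam e₀ s₀) e x₁ x₂)
      = (∑ x₁, ∑ x₂, eExp η Ce lam e x₁ x₂) *
        (if e = e₀ then
          ∑ x, Real.sqrt (Smarg η Ce lam e₀ s₀ x * muV η ends Ci lam (ep ends e₀ s₀) x)
         else 1) := by
  have hZ := (EMP_sum_eExp_pos hd η Ce lam e).ne'
  by_cases he : e = e₀
  · subst he
    rw [if_pos rfl, Finset.mul_sum]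
    obtain hs | hs : s₀ = 0 ∨ s₀ = 1 := by omega
    · -- s₀ = 0
      subst hs
      have keyS : ∀ x₁, (∑ x₂, eExp η Ce lam e x₁ x₂)
          = Smarg η Ce lam e 0 x₁ * (∑ y₁, ∑ y₂, eExp η Ce lam e y₁ y₂) := by
        intro x₁
        unfold Smarg muE
        rw [if_pos rfl, ← Finset.sum_div, div_mul_cancel₀ _ hZ]
      apply Finset.sum_congr rfl
      intro x₁ _
      have hpt : ∀ x₂, eExp η Ce (empUpdate η ends Ci Ce lam e 0) e x₁ x₂
          = eExp η Ce lam e x₁ x₂ *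
            (Real.sqrt (muV η ends Ci lam (ep ends e 0) x₁) /
              Real.sqrt (Smarg η Ce lam e 0 x₁)) := by
        intro x₂
        rw [EMP_eExp_update hη hd ends Ci Ce lam e 0 e x₁ x₂, if_pos rfl, if_pos rfl]
      rw [Finset.sum_congr rfl (fun x₂ _ => hpt x₂), ← Finset.sum_mul, keyS x₁,
        Real.sqrt_mul (EMP_Smarg_pos hd η Ce lam e 0 x₁).le,
        show Smarg η Ce lam e 0 x₁ * (∑ y₁, ∑ y₂, eExp η Ce lam e y₁ y₂) *
            (Real.sqrt (muV η ends Ci lam (ep ends e 0) x₁) /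
              Real.sqrt (Smarg η Ce lam e 0 x₁))
          = (∑ y₁, ∑ y₂, eExp η Ce lam e y₁ y₂) *
              Real.sqrt (muV η ends Ci lam (ep ends e 0) x₁) *
              (Smarg η Ce lam e 0 x₁ / Real.sqrt (Smarg η Ce lam e 0 x₁)) by ring,
        Real.div_sqrt]
      ring
    · -- s₀ = 1
      subst hs
      rw [Finset.sum_comm]
      have keyS : ∀ x₂, (∑ x₁, eExp η Ce lam e x₁ x₂)
          = Smarg η Ce lam e 1 x₂ * (∑ y₁, ∑ y₂, eExp η Ce lam e y₁ y₂) := by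
        intro x₂
        unfold Smarg muE
        rw [if_neg (show ¬((1 : Fin 2) = 0) by decide), ← Finset.sum_div,
          div_mul_cancel₀ _ hZ]
      apply Finset.sum_congr rfl
      intro x₂ _
      have hpt : ∀ x₁, eExp η Ce (empUpdate η ends Ci Ce lam e 1) e x₁ x₂
          = eExp η Ce lam e x₁ x₂ *
            (Real.sqrt (muV η ends Ci lam (ep ends e 1) x₂) /
              Real.sqrt (Smarg η Ce lam e 1 x₂)) := by
        intro x₁
        rw [EMP_eExp_update hη hd ends Ci Ce lam e 1 e x₁ x₂, if_pos rfl,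
          if_neg (show ¬((1 : Fin 2) = 0) by decide)]
      rw [Finset.sum_congr rfl (fun x₁ _ => hpt x₁), ← Finset.sum_mul, keyS x₂,
        Real.sqrt_mul (EMP_Smarg_pos hd η Ce lam e 1 x₂).le,
        show Smarg η Ce lam e 1 x₂ * (∑ y₁, ∑ y₂, eExp η Ce lam e y₁ y₂) *
            (Real.sqrt (muV η ends Ci lam (ep ends e 1) x₂) /
              Real.sqrt (Smarg η Ce lam e 1 x₂))
          = (∑ y₁, ∑ y₂, eExp η Ce lam e y₁ y₂) *
              Real.sqrt (muV η ends Ci lam (ep ends e 1) x₂) *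
              (Smarg η Ce lam e 1 x₂ / Real.sqrt (Smarg η Ce lam e 1 x₂)) by ring,
        Real.div_sqrt]
      ring
  · rw [if_neg he, mul_one]
    apply Finset.sum_congr rfl
    intro x₁ _
    apply Finset.sum_congr rfl
    intro x₂ _
    rw [EMP_eExp_update hη hd ends Ci Ce lam e₀ s₀ e x₁ x₂, if_neg he, mul_one]

lemma EMP_dualL_update (hη : 0 < η) (hd : 0 < d) (ends : Fin m → Fin n × Fin n)
    (Ci : Fin n → Fin d → ℝ) (Ce : Fin m → Fin d → Fin d → ℝ)
    (lam : Fin m → Fin 2 → Fin d → ℝ) (e₀ : Fin m) (s₀ : Fin 2) :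
    dualL η ends Ci Ce (empUpdate η ends Ci Ce lam e₀ s₀)
      = dualL η ends Ci Ce lam + (2 / η) * Real.log (∑ x, Real.sqrt
          (Smarg η Ce lam e₀ s₀ x * muV η ends Ci lam (ep ends e₀ s₀) x)) := by
  have hHpos : 0 < ∑ x, Real.sqrt
      (Smarg η Ce lam e₀ s₀ x * muV η ends Ci lam (ep ends e₀ s₀) x) :=
    Finset.sum_pos (fun x _ => Real.sqrt_pos.mpr
      (mul_pos (EMP_Smarg_pos hd η Ce lam e₀ s₀ x) (EMP_muV_pos hd η ends Ci lam _ x)))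
      ⟨⟨0, hd⟩, Finset.mem_univ _⟩
  unfold dualL
  have hv : ∀ i, Real.log (∑ x, vExp η ends Ci (empUpdate η ends Ci Ce lam e₀ s₀) i x)
      = Real.log (∑ x, vExp η ends Ci lam i x)
        + (if ep ends e₀ s₀ = i then Real.log (∑ x, Real.sqrt
            (Smarg η Ce lam e₀ s₀ x * muV η ends Ci lam (ep ends e₀ s₀) x)) else 0) := by
    intro i
    rw [EMP_sum_vExp_update hη hd ends Ci Ce lam e₀ s₀ i]
    by_cases h : ep ends e₀ s₀ = i
    · rw [if_pos h, if_pos h,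
        Real.log_mul (EMP_sum_vExp_pos hd η ends Ci lam i).ne' hHpos.ne']
    · rw [if_neg h, if_neg h, mul_one, add_zero]
  have he : ∀ e, Real.log (∑ x₁, ∑ x₂, eExp η Ce (empUpdate η ends Ci Ce lam e₀ s₀) e x₁ x₂)
      = Real.log (∑ x₁, ∑ x₂, eExp η Ce lam e x₁ x₂)
        + (if e = e₀ then Real.log (∑ x, Real.sqrt
            (Smarg η Ce lam e₀ s₀ x * muV η ends Ci lam (ep ends e₀ s₀) x)) else 0) := by
    intro e
    rw [EMP_sum_eExp_update hη hd ends Ci Ce lam e₀ s₀ e]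
    by_cases h : e = e₀
    · rw [if_pos h, if_pos h,
        Real.log_mul (EMP_sum_eExp_pos hd η Ce lam e).ne' hHpos.ne']
    · rw [if_neg h, if_neg h, mul_one, add_zero]
  simp only [hv, he, Finset.sum_add_distrib, Finset.sum_ite_eq, Finset.sum_ite_eq',
    Finset.mem_univ, if_true]
  ring

lemma EMP_hellinger_bound (hd : 0 < d) {η : ℝ} (hη : 0 < η) (S P : Fin d → ℝ)
    (hS : ∀ x, 0 < S x) (hP : ∀ x, 0 < P x)
    (hSsum : ∑ x, S x = 1) (hPsum : ∑ x, P x = 1) :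
    (1 / (4 * η)) * (∑ x, |S x - P x|) ^ 2
      ≤ -(2 / η) * Real.log (∑ x, Real.sqrt (S x * P x)) := by
  set H := ∑ x, Real.sqrt (S x * P x) with hH
  have hHpos : 0 < H :=
    Finset.sum_pos (fun x _ => Real.sqrt_pos.mpr (mul_pos (hS x) (hP x)))
      ⟨⟨0, hd⟩, Finset.mem_univ _⟩
  have h1 : ∑ x, (Real.sqrt (S x) - Real.sqrt (P x)) ^ 2 = 2 - 2 * H := by
    have e : ∀ x ∈ Finset.univ, (Real.sqrt (S x) - Real.sqrt (P x)) ^ 2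
        = S x + P x - 2 * Real.sqrt (S x * P x) := by
      intro x _
      rw [sub_sq, Real.sq_sqrt (hS x).le, Real.sq_sqrt (hP x).le, Real.sqrt_mul (hS x).le]
      ring
    rw [Finset.sum_congr rfl e, Finset.sum_sub_distrib, Finset.sum_add_distrib,
      hSsum, hPsum, ← Finset.mul_sum, ← hH]
    ring
  have h2 : ∑ x, (Real.sqrt (S x) + Real.sqrt (P x)) ^ 2 = 2 + 2 * H := by
    have e : ∀ x ∈ Finset.univ, (Real.sqrt (S x) + Real.sqrt (P x)) ^ 2
        = S x + P x + 2 * Real.sqrt (S x * P x) := by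
      intro x _
      rw [add_sq, Real.sq_sqrt (hS x).le, Real.sq_sqrt (hP x).le, Real.sqrt_mul (hS x).le]
      ring
    rw [Finset.sum_congr rfl e, Finset.sum_add_distrib, Finset.sum_add_distrib,
      hSsum, hPsum, ← Finset.mul_sum, ← hH]
    ring
  have habs : ∀ x ∈ Finset.univ, |S x - P x|
      = |Real.sqrt (S x) - Real.sqrt (P x)| * (Real.sqrt (S x) + Real.sqrt (P x)) := by
    intro x _
    have heq : S x - P x
        = (Real.sqrt (S x) - Real.sqrt (P x)) * (Real.sqrt (S x) + Real.sqrt (P x)) := by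
      have hs2 := Real.sq_sqrt (hS x).le
      have hp2 := Real.sq_sqrt (hP x).le
      nlinarith [hs2, hp2]
    rw [heq, abs_mul,
      abs_of_nonneg (show (0:ℝ) ≤ Real.sqrt (S x) + Real.sqrt (P x) by positivity)]
  have h3 : (∑ x, |S x - P x|) ^ 2 ≤ (2 - 2 * H) * (2 + 2 * H) := by
    calc (∑ x, |S x - P x|) ^ 2
        = (∑ x, |Real.sqrt (S x) - Real.sqrt (P x)| * (Real.sqrt (S x) + Real.sqrt (P x))) ^ 2 := by
          rw [Finset.sum_congr rfl habs]
      _ ≤ (∑ x, |Real.sqrt (S x) - Real.sqrt (P x)| ^ 2) *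
            ∑ x, (Real.sqrt (S x) + Real.sqrt (P x)) ^ 2 :=
          Finset.sum_mul_sq_le_sq_mul_sq _ _ _
      _ = (2 - 2 * H) * (2 + 2 * H) := by
          simp only [sq_abs]
          rw [h1, h2]
  have h3' : (∑ x, |S x - P x|) ^ 2 ≤ 4 - 4 * H ^ 2 := by nlinarith [h3]
  have h4 : Real.log (H ^ 2) ≤ H ^ 2 - 1 :=
    Real.log_le_sub_one_of_pos (pow_pos hHpos 2)
  have hlog : Real.log (H ^ 2) = 2 * Real.log H := by
    rw [Real.log_pow]; norm_num
  have hT : (∑ x, |S x - P x|) ^ 2 ≤ -8 * Real.log H := by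
    rw [hlog] at h4; linarith
  calc (1 / (4 * η)) * (∑ x, |S x - P x|) ^ 2
      ≤ (1 / (4 * η)) * (-8 * Real.log H) :=
        mul_le_mul_of_nonneg_left hT (by positivity)
    _ = -(2 / η) * Real.log H := by field_simp; ring

/-- The EMP update at edge `e₀`, endpoint `i₀ = ep ends e₀ s₀`, decreases the
dual objective by exactly `-(2/η) log Σ_x √(S_{e₀,i₀}^λ(x) μ_{i₀}^λ(x))`, which
is at least `(1/(4η)) ‖S_{e₀,i₀}^λ - μ_{i₀}^λ‖₁²`. -/
theorem emp_update_improvement (η : ℝ) (hη : 0 < η) (hd : 2 ≤ d)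
    (ends : Fin m → Fin n × Fin n)
    (Ci : Fin n → Fin d → ℝ) (Ce : Fin m → Fin d → Fin d → ℝ)
    (lam : Fin m → Fin 2 → Fin d → ℝ) (e₀ : Fin m) (s₀ : Fin 2) :
    dualL η ends Ci Ce lam - dualL η ends Ci Ce (empUpdate η ends Ci Ce lam e₀ s₀)
      = -(2 / η) * Real.log (∑ x, Real.sqrt
          (Smarg η Ce lam e₀ s₀ x * muV η ends Ci lam (ep ends e₀ s₀) x)) ∧
    (1 / (4 * η)) *
        (∑ x, |Smarg η Ce lam e₀ s₀ x - muV η ends Ci lam (ep ends e₀ s₀) x|) ^ 2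
      ≤ dualL η ends Ci Ce lam
          - dualL η ends Ci Ce (empUpdate η ends Ci Ce lam e₀ s₀) := by
  have hd0 : 0 < d := by omega
  have hdiff : dualL η ends Ci Ce lam - dualL η ends Ci Ce (empUpdate η ends Ci Ce lam e₀ s₀)
      = -(2 / η) * Real.log (∑ x, Real.sqrt
          (Smarg η Ce lam e₀ s₀ x * muV η ends Ci lam (ep ends e₀ s₀) x)) := by
    rw [EMP_dualL_update hη hd0 ends Ci Ce lam e₀ s₀]; ring
  refine ⟨hdiff, ?_⟩
  rw [hdiff]
  exact EMP_hellinger_bound hd0 hη (Smarg η Ce lam e₀ s₀) (muV η ends Ci lam (ep ends e₀ s₀))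
    (EMP_Smarg_pos hd0 η Ce lam e₀ s₀) (EMP_muV_pos hd0 η ends Ci lam _)
    (EMP_sum_Smarg hd0 η Ce lam e₀ s₀) (EMP_sum_muV hd0 η ends Ci lam _)

end
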